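/- Consider the three-qubit inhomogeneous bit-flip map Φ_IBF(ρ) = c_0 ρ + c_1 (X_1 ρ X_1 + X_2 ρ X_2 + X_3 ρ X_3) on M_8(ℂ), where c_0, c_1 ∈ ℝ satisfy c_0 + 3c_1 = 1 and c_0 · c_1 < 0. Let P = |000⟩⟨000| + |111⟩⟨111| be the projector onto the code space span{|000⟩, |111⟩}. Then for every positive semidefinite ρ ∈ M_8(ℂ) with trace 1 satisfying ρ = P ρ P, the output Φ_IBF(ρ) is not positive semidefinite. -/

import Mathlib

open Matrix Kronecker ComplexOrder

/-- The Pauli `X` matrix. -/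
noncomputable def pauliX : Matrix (Fin 2) (Fin 2) ℂ := !![0, 1; 1, 0]

/-- `X₁ = X ⊗ I ⊗ I` on three qubits. -/
noncomputable def X₁ : Matrix ((Fin 2 × Fin 2) × Fin 2) ((Fin 2 × Fin 2) × Fin 2) ℂ :=
  (pauliX ⊗ₖ (1 : Matrix (Fin 2) (Fin 2) ℂ)) ⊗ₖ (1 : Matrix (Fin 2) (Fin 2) ℂ)

/-- `X₂ = I ⊗ X ⊗ I` on three qubits. -/
noncomputable def X₂ : Matrix ((Fin 2 × Fin 2) × Fin 2) ((Fin 2 × Fin 2) × Fin 2) ℂ :=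
  ((1 : Matrix (Fin 2) (Fin 2) ℂ) ⊗ₖ pauliX) ⊗ₖ (1 : Matrix (Fin 2) (Fin 2) ℂ)

/-- `X₃ = I ⊗ I ⊗ X` on three qubits. -/
noncomputable def X₃ : Matrix ((Fin 2 × Fin 2) × Fin 2) ((Fin 2 × Fin 2) × Fin 2) ℂ :=
  ((1 : Matrix (Fin 2) (Fin 2) ℂ) ⊗ₖ (1 : Matrix (Fin 2) (Fin 2) ℂ)) ⊗ₖ pauliX

/-- The projector `P = |000⟩⟨000| + |111⟩⟨111|` onto the code space. -/
noncomputable def codeProj : Matrix ((Fin 2 × Fin 2) × Fin 2) ((Fin 2 × Fin 2) × Fin 2) ℂ :=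
  Matrix.single ((0, 0), 0) ((0, 0), 0) 1 +
    Matrix.single ((1, 1), 1) ((1, 1), 1) 1

lemma psd_diag_nonneg {n : Type*} [Fintype n] [DecidableEq n]
    {M : Matrix n n ℂ} (h : M.PosSemidef) (i : n) : 0 ≤ M i i := by
  simpa [dotProduct, Pi.single_apply] using h.dotProduct_mulVec_nonneg (Pi.single i 1)

/-- **Example (failure of positivity for the inhomogeneous bit-flip map).**
For `Φ_IBF(ρ) = c₀ ρ + c₁ ∑ₙ Xₙ ρ Xₙ` with `c₀ + 3c₁ = 1` and `c₀ c₁ < 0`, any density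
matrix `ρ` supported on the code space `span{|000⟩, |111⟩}` has non-positive-semidefinite
output `Φ_IBF(ρ)`. -/
theorem stmt_6 (c₀ c₁ : ℝ) (hsum : c₀ + 3 * c₁ = 1) (hsign : c₀ * c₁ < 0)
    (ρ : Matrix ((Fin 2 × Fin 2) × Fin 2) ((Fin 2 × Fin 2) × Fin 2) ℂ)
    (hρ : ρ.PosSemidef) (htr : ρ.trace = 1) (hcode : ρ = codeProj * ρ * codeProj) :
    ¬ ((c₀ : ℂ) • ρ +
        (c₁ : ℂ) • (X₁ * ρ * X₁ + X₂ * ρ * X₂ + X₃ * ρ * X₃)).PosSemidef := by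
  intro h
  set a : ℂ := ρ ((0,0),0) ((0,0),0) with ha
  set d : ℂ := ρ ((1,1),1) ((1,1),1) with hd
  -- vanishing of the six off-code diagonal entries
  have hz : ρ ((1,0),0) ((1,0),0) = 0 ∧ ρ ((0,1),0) ((0,1),0) = 0 ∧
      ρ ((0,0),1) ((0,0),1) = 0 ∧ ρ ((1,1),0) ((1,1),0) = 0 ∧
      ρ ((1,0),1) ((1,0),1) = 0 ∧ ρ ((0,1),1) ((0,1),1) = 0 := by
    rw [hcode]
    simp [codeProj, Matrix.mul_apply, Fintype.sum_prod_type, Fin.sum_univ_two,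
      Matrix.single, Matrix.add_apply, Prod.ext_iff]
  obtain ⟨hz1, hz2, hz3, hz4, hz5, hz6⟩ := hz
  -- trace condition gives a + d = 1
  have htrace : a + d = 1 := by
    have := htr
    simp only [Matrix.trace, Matrix.diag, Fintype.sum_prod_type, Fin.sum_univ_two] at this
    rw [hz1, hz2, hz3, hz4, hz5, hz6] at this
    linear_combination this
  -- nonnegativity of a and d
  have hA := psd_diag_nonneg hρ ((0,0),0)
  have hD := psd_diag_nonneg hρ ((1,1),1)
  rw [← ha] at hA
  rw [← hd] at hD
  rw [Complex.le_def] at hA hD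
  have haim : a.im = 0 := hA.2.symm
  have hdim : d.im = 0 := hD.2.symm
  have hare : 0 ≤ a.re := by simpa using hA.1
  have hdre : 0 ≤ d.re := by simpa using hD.1
  have hsum1 : a.re + d.re = 1 := by
    have := congrArg Complex.re htrace
    simpa using this
  -- entry computations for the conjugations
  have e1 : (X₁ * ρ * X₁) ((0,0),0) ((0,0),0) = ρ ((1,0),0) ((1,0),0) := by
    simp [X₁, pauliX, Matrix.mul_apply, Fintype.sum_prod_type, Fin.sum_univ_two,
      Matrix.one_apply, kroneckerMap_apply]
  have e2 : (X₂ * ρ * X₂) ((0,0),0) ((0,0),0) = ρ ((0,1),0) ((0,1),0) := by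
    simp [X₂, pauliX, Matrix.mul_apply, Fintype.sum_prod_type, Fin.sum_univ_two,
      Matrix.one_apply, kroneckerMap_apply]
  have e3 : (X₃ * ρ * X₃) ((0,0),0) ((0,0),0) = ρ ((0,0),1) ((0,0),1) := by
    simp [X₃, pauliX, Matrix.mul_apply, Fintype.sum_prod_type, Fin.sum_univ_two,
      Matrix.one_apply, kroneckerMap_apply]
  have f1 : (X₁ * ρ * X₁) ((0,1),1) ((0,1),1) = ρ ((1,1),1) ((1,1),1) := by
    simp [X₁, pauliX, Matrix.mul_apply, Fintype.sum_prod_type, Fin.sum_univ_two,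
      Matrix.one_apply, kroneckerMap_apply]
  have f2 : (X₂ * ρ * X₂) ((0,1),1) ((0,1),1) = ρ ((0,0),1) ((0,0),1) := by
    simp [X₂, pauliX, Matrix.mul_apply, Fintype.sum_prod_type, Fin.sum_univ_two,
      Matrix.one_apply, kroneckerMap_apply]
  have f3 : (X₃ * ρ * X₃) ((0,1),1) ((0,1),1) = ρ ((0,1),0) ((0,1),0) := by
    simp [X₃, pauliX, Matrix.mul_apply, Fintype.sum_prod_type, Fin.sum_univ_two,
      Matrix.one_apply, kroneckerMap_apply]
  have g1 : (X₁ * ρ * X₁) ((1,0),0) ((1,0),0) = ρ ((0,0),0) ((0,0),0) := by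
    simp [X₁, pauliX, Matrix.mul_apply, Fintype.sum_prod_type, Fin.sum_univ_two,
      Matrix.one_apply, kroneckerMap_apply]
  have g2 : (X₂ * ρ * X₂) ((1,0),0) ((1,0),0) = ρ ((1,1),0) ((1,1),0) := by
    simp [X₂, pauliX, Matrix.mul_apply, Fintype.sum_prod_type, Fin.sum_univ_two,
      Matrix.one_apply, kroneckerMap_apply]
  have g3 : (X₃ * ρ * X₃) ((1,0),0) ((1,0),0) = ρ ((1,0),1) ((1,0),1) := by
    simp [X₃, pauliX, Matrix.mul_apply, Fintype.sum_prod_type, Fin.sum_univ_two,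
      Matrix.one_apply, kroneckerMap_apply]
  have k1 : (X₁ * ρ * X₁) ((1,1),1) ((1,1),1) = ρ ((0,1),1) ((0,1),1) := by
    simp [X₁, pauliX, Matrix.mul_apply, Fintype.sum_prod_type, Fin.sum_univ_two,
      Matrix.one_apply, kroneckerMap_apply]
  have k2 : (X₂ * ρ * X₂) ((1,1),1) ((1,1),1) = ρ ((1,0),1) ((1,0),1) := by
    simp [X₂, pauliX, Matrix.mul_apply, Fintype.sum_prod_type, Fin.sum_univ_two,
      Matrix.one_apply, kroneckerMap_apply]
  have k3 : (X₃ * ρ * X₃) ((1,1),1) ((1,1),1) = ρ ((1,1),0) ((1,1),0) := by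
    simp [X₃, pauliX, Matrix.mul_apply, Fintype.sum_prod_type, Fin.sum_univ_two,
      Matrix.one_apply, kroneckerMap_apply]
  set M := (c₀ : ℂ) • ρ + (c₁ : ℂ) • (X₁ * ρ * X₁ + X₂ * ρ * X₂ + X₃ * ρ * X₃) with hM
  have M00 : M ((0,0),0) ((0,0),0) = (c₀ : ℂ) * a := by
    simp only [hM, Matrix.add_apply, Matrix.smul_apply, e1, e2, e3, hz1, hz2, hz3,
      smul_eq_mul]
    ring_nf
    rw [ha]
  have M11 : M ((1,1),1) ((1,1),1) = (c₀ : ℂ) * d := by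
    simp only [hM, Matrix.add_apply, Matrix.smul_apply, k1, k2, k3, hz4, hz5, hz6,
      smul_eq_mul]
    ring_nf
    rw [hd]
  have M10 : M ((1,0),0) ((1,0),0) = (c₁ : ℂ) * a := by
    simp only [hM, Matrix.add_apply, Matrix.smul_apply, g1, g2, g3, hz1, hz4, hz5,
      smul_eq_mul]
    ring_nf
    rw [ha]
  have M01 : M ((0,1),1) ((0,1),1) = (c₁ : ℂ) * d := by
    simp only [hM, Matrix.add_apply, Matrix.smul_apply, f1, f2, f3, hz2, hz3, hz6,
      smul_eq_mul]
    ring_nf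
    rw [hd]
  -- one of a.re, d.re is positive
  have hpos : 0 < a.re ∨ 0 < d.re := by
    by_contra hc
    push_neg at hc
    nlinarith [hc.1, hc.2]
  rcases mul_neg_iff.mp hsign with ⟨hc0, hc1⟩ | ⟨hc0, hc1⟩
  · -- c₀ > 0, c₁ < 0 : use entry c₁ * a or c₁ * d
    rcases hpos with hp | hp
    · have := psd_diag_nonneg h ((1,0),0)
      rw [M10, Complex.le_def] at this
      have : 0 ≤ ((c₁ : ℂ) * a).re := this.1
      rw [Complex.mul_re, Complex.ofReal_re, Complex.ofReal_im, haim] at this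
      simp only [zero_mul, mul_zero, sub_zero] at this
      linarith [mul_neg_of_neg_of_pos hc1 hp]
    · have := psd_diag_nonneg h ((0,1),1)
      rw [M01, Complex.le_def] at this
      have : 0 ≤ ((c₁ : ℂ) * d).re := this.1
      rw [Complex.mul_re, Complex.ofReal_re, Complex.ofReal_im, hdim] at this
      simp only [zero_mul, mul_zero, sub_zero] at this
      linarith [mul_neg_of_neg_of_pos hc1 hp]
  · -- c₀ < 0, c₁ > 0 : use entry c₀ * a or c₀ * d
    rcases hpos with hp | hp
    · have := psd_diag_nonneg h ((0,0),0)
      rw [M00, Complex.le_def] at this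
      have : 0 ≤ ((c₀ : ℂ) * a).re := this.1
      rw [Complex.mul_re, Complex.ofReal_re, Complex.ofReal_im, haim] at this
      simp only [zero_mul, mul_zero, sub_zero] at this
      linarith [mul_neg_of_neg_of_pos hc0 hp]
    · have := psd_diag_nonneg h ((1,1),1)
      rw [M11, Complex.le_def] at this
      have : 0 ≤ ((c₀ : ℂ) * d).re := this.1
      rw [Complex.mul_re, Complex.ofReal_re, Complex.ofReal_im, hdim] at this
      simp only [zero_mul, mul_zero, sub_zero] at this
      linarith [mul_neg_of_neg_of_pos hc0 hp]
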